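/- If Φ is an equilibrium-free flow on a closed Riemannian manifold possessing a generalized symmetry with multiplier of absolute value different from 1, then Φ has no periodic orbit, and consequently no compact invariant set of Φ is uniformly hyperbolic; in particular Φ is not an Anosov flow. -/

import Mathlib

open Manifold Filter Topology

section Aux

variable {P : Type*} (Φ : ℝ → P → P)

private lemma flow_neg_fix (hΦ0 : Φ 0 = id) (hΦadd : ∀ s t : ℝ, Φ (s + t) = Φ s ∘ Φ t)
    {s : ℝ} {x : P} (h : Φ s x = x) : Φ (-s) x = x := by
  conv_lhs => rw [← h, ← Function.comp_apply (f := Φ (-s)), ← hΦadd]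
  simp [hΦ0]

private lemma flow_int_fix (hΦ0 : Φ 0 = id) (hΦadd : ∀ s t : ℝ, Φ (s + t) = Φ s ∘ Φ t)
    {s : ℝ} {x : P} (h : Φ s x = x) (k : ℤ) : Φ (k * s) x = x := by
  have hnat : ∀ m : ℕ, Φ (m * s) x = x := by
    intro m
    induction m with
    | zero => simp [hΦ0]
    | succ m ih =>
      have : ((m + 1 : ℕ) : ℝ) * s = (m : ℝ) * s + s := by push_cast; ring
      rw [this, hΦadd, Function.comp_apply, h, ih]
  induction k using Int.induction_on with
  | zero => simp [hΦ0]
  | succ i _ => exact_mod_cast hnat (i + 1)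
  | pred i _ =>
    have : ((-i - 1 : ℤ) : ℝ) * s = -(((i + 1 : ℕ) : ℝ) * s) := by push_cast; ring
    rw [this]
    exact flow_neg_fix Φ hΦ0 hΦadd (hnat (i + 1))

end Aux


/-- Let `Φ` be an equilibrium-free flow on a closed Riemannian manifold `P`
possessing a generalized symmetry `R` with multiplier `μ`, `|μ| ≠ 1`. Let
`UniformlyHyperbolic : Set P → Prop` be any notion of uniform hyperbolicity for compact
invariant sets of `Φ` satisfying the Anosov Closing Lemma (every uniformly hyperbolic compact
invariant set contains a point on a non-stationary periodic orbit). Then `Φ` has no periodic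
orbit, no compact invariant set of `Φ` is uniformly hyperbolic, and in particular `Φ` is not
an Anosov flow (the whole manifold is not uniformly hyperbolic). -/
theorem no_periodic_orbits_and_no_hyperbolic_sets
    {n : ℕ} {P : Type*} [TopologicalSpace P] [CompactSpace P]
    [ChartedSpace (EuclideanSpace ℝ (Fin n)) P]
    [IsManifold (𝓡 n) (⊤ : ℕ∞) P]
    (Φ : ℝ → P → P)
    (hΦ0 : Φ 0 = id)
    (hΦadd : ∀ s t : ℝ, Φ (s + t) = Φ s ∘ Φ t)
    (hΦcont : Continuous (fun q : ℝ × P => Φ q.1 q.2))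
    (hfree : ∀ p : P, ∃ t : ℝ, Φ t p ≠ p)  -- equilibrium-free
    (R : Diffeomorph (𝓡 n) (𝓡 n) P P (⊤ : ℕ∞)) (μ : ℝ) (hμ0 : μ ≠ 0) (hμ1 : |μ| ≠ 1)
    (hR : ∀ (t : ℝ) (p : P), R (Φ t p) = Φ (μ * t) (R p))
    (UniformlyHyperbolic : Set P → Prop)
    -- Anosov Closing Lemma, taken as a hypothesis:
    (closing : ∀ Λ : Set P, IsCompact Λ → (∀ t : ℝ, Φ t '' Λ ⊆ Λ) →
      UniformlyHyperbolic Λ →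
      ∃ p ∈ Λ, ∃ T : ℝ, 0 < T ∧ Φ T p = p) :
    -- Φ has no periodic orbit
    (¬ ∃ (p : P) (T : ℝ), 0 < T ∧ Φ T p = p) ∧
    -- no compact invariant set is uniformly hyperbolic
    (∀ Λ : Set P, IsCompact Λ → (∀ t : ℝ, Φ t '' Λ ⊆ Λ) → ¬ UniformlyHyperbolic Λ) ∧
    -- in particular, Φ is not Anosov
    ¬ UniformlyHyperbolic (Set.univ : Set P) := by
  have key : ¬ ∃ (p : P) (T : ℝ), 0 < T ∧ Φ T p = p := by
    rintro ⟨p, T, hT, hTp⟩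
    -- Normalize: get a symmetry with multiplier of absolute value < 1.
    obtain ⟨f, c, hc0, hc1, hfΦ⟩ :
        ∃ (f : P → P) (c : ℝ), c ≠ 0 ∧ |c| < 1 ∧ ∀ t x, f (Φ t x) = Φ (c * t) (f x) := by
      rcases hμ1.lt_or_gt with h | h
      · exact ⟨R, μ, hμ0, h, fun t x => hR t x⟩
      · refine ⟨R.symm, μ⁻¹, inv_ne_zero hμ0, ?_, ?_⟩
        · rw [abs_inv]
          exact inv_lt_one_of_one_lt₀ h
        · intro t x
          apply R.toEquiv.injective
          show R (R.symm (Φ t x)) = R (Φ (μ⁻¹ * t) (R.symm x))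
          rw [R.apply_symm_apply, hR]
          rw [R.apply_symm_apply]
          congr 1
          field_simp
    -- The iterated images of p are periodic with periods → 0.
    set x : ℕ → P := fun k => f^[k] p with hx
    have hper : ∀ k, Φ (c ^ k * T) (x k) = x k := by
      intro k
      induction k with
      | zero => simpa [hx] using hTp
      | succ k ih =>
        have : x (k + 1) = f (x k) := Function.iterate_succ_apply' f k p
        rw [this]
        calc Φ (c ^ (k + 1) * T) (f (x k)) = Φ (c * (c ^ k * T)) (f (x k)) := by ring_nf
          _ = f (Φ (c ^ k * T) (x k)) := (hfΦ _ _).symm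
          _ = f (x k) := by rw [ih]
    set τ : ℕ → ℝ := fun k => |c| ^ k * T with hτ
    have hτpos : ∀ k, 0 < τ k := fun k =>
      mul_pos (pow_pos (abs_pos.mpr hc0) k) hT
    have hτfix : ∀ k, Φ (τ k) (x k) = x k := by
      intro k
      have h1 : τ k = |c ^ k * T| := by
        rw [abs_mul, abs_pow, abs_of_pos hT]
      rcases abs_cases (c ^ k * T) with ⟨he, _⟩ | ⟨he, _⟩
      · rw [h1, he]; exact hper k
      · rw [h1, he]; exact flow_neg_fix Φ hΦ0 hΦadd (hper k)
    have hτ0 : Tendsto τ atTop (𝓝 0) := by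
      have := (tendsto_pow_atTop_nhds_zero_of_lt_one (abs_nonneg c) hc1).mul_const T
      simpa using this
    -- A cluster point of the sequence x
    have hneb : (Filter.map x atTop).NeBot := Filter.map_neBot
    obtain ⟨q, -, hq⟩ := isCompact_univ.exists_clusterPt
      (le_principal_iff.mpr (Filter.univ_mem))
      (f := Filter.map x atTop)
    -- a subfilter along which x → q
    set V : Filter ℕ := Filter.comap x (𝓝 q) ⊓ atTop with hV
    have hVneb : V.NeBot := by
      rw [hV, ← Filter.map_neBot_iff x, Filter.push_pull']
      exact hq
    have hVle : V ≤ atTop := inf_le_right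
    have hxV : Tendsto x V (𝓝 q) := tendsto_iff_comap.mpr inf_le_left
    -- neighborhoods of Φ t q and q are never disjoint
    have hsep : ∀ t : ℝ, ¬ Disjoint (𝓝 (Φ t q)) (𝓝 q) := by
      intro t hdis
      set r : ℕ → ℝ := fun k => t - ⌊t / τ k⌋ * τ k with hr
      have hr0 : ∀ k, 0 ≤ r k := fun k => Int.sub_floor_div_mul_nonneg t (hτpos k)
      have hrlt : ∀ k, r k ≤ τ k := fun k => (Int.sub_floor_div_mul_lt t (hτpos k)).le
      have hrt : Tendsto r atTop (𝓝 0) :=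
        tendsto_of_tendsto_of_tendsto_of_le_of_le tendsto_const_nhds hτ0 hr0 hrlt
      have hrV : Tendsto r V (𝓝 0) := hrt.mono_left hVle
      have heq : ∀ k, Φ t (x k) = Φ (r k) (x k) := by
        intro k
        have h1 : t = r k + ⌊t / τ k⌋ * τ k := by rw [hr]; ring
        conv_lhs => rw [h1]
        rw [hΦadd, Function.comp_apply,
          flow_int_fix Φ hΦ0 hΦadd (hτfix k) ⌊t / τ k⌋]
      have t1 : Tendsto (fun k => Φ t (x k)) V (𝓝 (Φ t q)) := by
        have hco : Continuous (Φ t) :=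
          hΦcont.comp (continuous_const.prodMk continuous_id)
        exact (hco.tendsto q).comp hxV
      have t2 : Tendsto (fun k => Φ t (x k)) V (𝓝 q) := by
        have h3 : Tendsto (fun k => (r k, x k)) V (𝓝 (0, q)) := hrV.prodMk_nhds hxV
        have h4 : Tendsto (fun k => Φ (r k) (x k)) V (𝓝 (Φ 0 q)) :=
          (hΦcont.tendsto (0, q)).comp h3
        have h5 : Φ 0 q = q := by rw [hΦ0]; rfl
        rw [h5] at h4
        exact h4.congr (fun k => (heq k).symm)
      have hbot : Filter.map (fun k => Φ t (x k)) V ≤ ⊥ :=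
        hdis.eq_bot ▸ le_inf t1 t2
      exact (Filter.map_neBot (f := V) (m := fun k => Φ t (x k))).ne (le_bot_iff.mp hbot)
    -- local Hausdorffness via charts: non-disjoint nhds inside a chart means equal
    set e := chartAt (EuclideanSpace ℝ (Fin n)) q with he
    have hqU : q ∈ e.source := mem_chart_source _ q
    have hloc : ∀ y ∈ e.source, ¬ Disjoint (𝓝 y) (𝓝 q) → y = q := by
      intro y hy hnd
      by_contra hne
      have hne' : e y ≠ e q := fun h => hne (e.injOn hy hqU h)
      obtain ⟨A, B, hA, hB, hyA, hqB, hAB⟩ := t2_separation hne'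
      apply hnd
      rw [Filter.disjoint_iff]
      refine ⟨e.source ∩ e ⁻¹' A, ?_, e.source ∩ e ⁻¹' B, ?_, ?_⟩
      · exact (e.isOpen_inter_preimage hA).mem_nhds ⟨hy, hyA⟩
      · exact (e.isOpen_inter_preimage hB).mem_nhds ⟨hqU, hqB⟩
      · exact (hAB.preimage e).mono Set.inter_subset_right Set.inter_subset_right
    -- small times fix q
    have hcq : Continuous fun t : ℝ => Φ t q :=
      hΦcont.comp (continuous_id.prodMk continuous_const)
    have hev : ∀ᶠ t in 𝓝 (0 : ℝ), Φ t q ∈ e.source := by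
      have h0 : Φ 0 q ∈ e.source := by rw [hΦ0]; exact hqU
      exact (hcq.tendsto 0).eventually_mem (e.open_source.mem_nhds h0)
    obtain ⟨ε, hε, hball⟩ := Metric.eventually_nhds_iff.mp hev
    have hsmall : ∀ t : ℝ, |t| < ε → Φ t q = q := by
      intro t ht
      have : dist t 0 < ε := by simpa [Real.dist_eq] using ht
      exact hloc _ (hball this) (hsep t)
    -- all times fix q
    have hall : ∀ t : ℝ, Φ t q = q := by
      intro t
      set s : ℝ := ε / 2 with hs
      have hspos : 0 < s := by positivity
      have hsfix : Φ s q = q := hsmall s (by rw [abs_of_pos hspos]; linarith)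
      have hr0 : 0 ≤ t - ⌊t / s⌋ * s := Int.sub_floor_div_mul_nonneg t hspos
      have hrlt : t - ⌊t / s⌋ * s < s := Int.sub_floor_div_mul_lt t hspos
      have h1 : t = (t - ⌊t / s⌋ * s) + ⌊t / s⌋ * s := by ring
      rw [h1, hΦadd, Function.comp_apply,
        flow_int_fix Φ hΦ0 hΦadd hsfix ⌊t / s⌋]
      exact hsmall _ (by rw [abs_of_nonneg hr0]; linarith)
    obtain ⟨t, ht⟩ := hfree q
    exact ht (hall t)
  refine ⟨key, ?_, ?_⟩
  · intro Λ hcomp hinv hhyp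
    obtain ⟨p, -, T, hT, hfix⟩ := closing Λ hcomp hinv hhyp
    exact key ⟨p, T, hT, hfix⟩
  · intro hhyp
    obtain ⟨p, -, T, hT, hfix⟩ := closing Set.univ isCompact_univ
      (fun t => Set.subset_univ _) hhyp
    exact key ⟨p, T, hT, hfix⟩
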